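/- arXiv:1407.4504 — 7 statements merged into one kernel-verified Lean document; each statement's English description precedes it below -/
import Mathlib

section
/- A point x* ∈ X is a fixed point of the best-response map x̂ (i.e., x̂(x*) = x*) if and only if x* is a coordinate-wise stationary point of Problem (P). (Proposition 1(i).) -/
open scoped RealInnerProductSpace
open Filter MeasureTheory ProbabilityTheory

/-- The `i`-th block space `ℝ^{n i}`. -/
abbrev Blk {N : ℕ} (n : Fin N → ℕ) (i : Fin N) := EuclideanSpace ℝ (Fin (n i))

/-- The full space `ℝ^n = ℝ^{n 0} × ⋯ × ℝ^{n (N-1)}` with the Euclidean (ℓ²) norm. -/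
abbrev Full {N : ℕ} (n : Fin N → ℕ) := PiLp 2 (fun i => Blk n i)

/-- `upd x i xi` is the vector obtained from `x` by replacing its `i`-th block with `xi`. -/
noncomputable def upd {N : ℕ} {n : Fin N → ℕ} (x : Full n) (i : Fin N) (xi : Blk n i) :
    Full n :=
  WithLp.toLp 2 (Function.update x i xi)

/-- Partial gradient `∇_{x_i} F (x)` of `F` with respect to the `i`-th block. -/
noncomputable def pgrad {N : ℕ} {n : Fin N → ℕ} (F : Full n → ℝ) (x : Full n) (i : Fin N) :
    Blk n i :=
  gradient (fun z => F (upd x i z)) (x i)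

/-- `ξ` is a subgradient of `g` at `x` relative to the set `S`. -/
def IsSubgradOn {E : Type*} [NormedAddCommGroup E] [InnerProductSpace ℝ E]
    (S : Set E) (g : E → ℝ) (x ξ : E) : Prop :=
  ∀ y ∈ S, g x + ⟪ξ, y - x⟫ ≤ g y

/-- `xs` is a stationary point of `min_{x ∈ X} F x + G x`: there is a subgradient
`ξ ∈ ∂G(xs)` with `(∇F(xs) + ξ)ᵀ (y - xs) ≥ 0` for all `y ∈ X`. -/
def IsStationaryPt {N : ℕ} {n : Fin N → ℕ} (X : Set (Full n)) (F G : Full n → ℝ)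
    (xs : Full n) : Prop :=
  ∃ ξ : Full n, IsSubgradOn X G xs ξ ∧ ∀ y ∈ X, 0 ≤ ⟪gradient F xs + ξ, y - xs⟫

/-- `xs` is a coordinate-wise stationary point: for each block `i` there is a subgradient
`ξ_i` at `xs i` of the convex function `x_i ↦ G (x_i, xs_{-i})` with
`(∇_{x_i} F(xs) + ξ_i)ᵀ (y_i - xs_i) ≥ 0` for all `y_i ∈ X_i`. -/
def IsCoordStationaryPt {N : ℕ} {n : Fin N → ℕ} (Xi : ∀ i, Set (Blk n i))
    (F G : Full n → ℝ) (xs : Full n) : Prop :=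
  ∀ i, ∃ ξi : Blk n i,
    IsSubgradOn (Xi i) (fun zi => G (upd xs i zi)) (xs i) ξi ∧
    ∀ yi ∈ Xi i, 0 ≤ ⟪pgrad F xs i + ξi, yi - xs i⟫

section Aux
variable {E : Type*} [NormedAddCommGroup E] [InnerProductSpace ℝ E] [CompleteSpace E]

lemma dirSlope_tendsto {f : E → ℝ} {x gx : E} (hf : HasGradientAt f gx x) (v : E) :
    Tendsto (fun t : ℝ => (f (x + t • v) - f x) / t) (nhdsWithin 0 (Set.Ioi 0))
      (nhds ⟪gx, v⟫) := by
  have hc : HasDerivAt (fun t : ℝ => x + t • v) v 0 := by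
    simpa using ((hasDerivAt_id (0:ℝ)).smul_const v).const_add x
  have hF := hf.hasFDerivAt
  have hcomp : HasDerivAt (fun t : ℝ => f (x + t • v)) ⟪gx, v⟫ 0 := by
    have h0 : HasFDerivAt f (InnerProductSpace.toDual ℝ E gx) ((fun t : ℝ => x + t • v) 0) := by
      simpa using hF
    exact h0.comp_hasDerivAt 0 hc
  have h1 := hasDerivAt_iff_tendsto_slope.mp hcomp
  have h2 := h1.mono_left (nhdsWithin_mono 0 (fun t ht => ne_of_gt ht))
  refine h2.congr' ?_
  filter_upwards [self_mem_nhdsWithin] with t ht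
  simp [slope_def_field, div_eq_inv_mul]

lemma grad_dir_le {f : E → ℝ} {x gx : E} (hf : HasGradientAt f gx x) (v : E) {c : ℝ}
    (h : ∀ t : ℝ, t ∈ Set.Ioc (0:ℝ) 1 → (f (x + t • v) - f x) / t ≤ c) : ⟪gx, v⟫ ≤ c :=
  le_of_tendsto (dirSlope_tendsto hf v)
    (Filter.eventually_of_mem (Ioc_mem_nhdsGT_of_mem ⟨le_refl 0, zero_lt_one⟩) h)

lemma grad_dir_ge {f : E → ℝ} {x gx : E} (hf : HasGradientAt f gx x) (v : E) {c : ℝ}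
    (h : ∀ t : ℝ, t ∈ Set.Ioc (0:ℝ) 1 → c ≤ (f (x + t • v) - f x) / t) : c ≤ ⟪gx, v⟫ :=
  ge_of_tendsto (dirSlope_tendsto hf v)
    (Filter.eventually_of_mem (Ioc_mem_nhdsGT_of_mem ⟨le_refl 0, zero_lt_one⟩) h)

lemma convexOn_grad_le {s : Set E} {f : E → ℝ} (hf : ConvexOn ℝ s f) {x z : E}
    (hx : x ∈ s) (hz : z ∈ s) {gx : E} (hg : HasGradientAt f gx x) :
    f x + ⟪gx, z - x⟫ ≤ f z := by
  have h : ⟪gx, z - x⟫ ≤ f z - f x := by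
    apply grad_dir_le hg
    intro t ht
    rw [div_le_iff₀ ht.1]
    have hmem : x + t • (z - x) = (1 - t) • x + t • z := by module
    have h2 := hf.2 hx hz (by linarith [ht.2] : (0:ℝ) ≤ 1 - t) (le_of_lt ht.1) (by ring)
    rw [hmem]
    simp only [smul_eq_mul] at h2; nlinarith [h2]
  linarith

lemma min_subgrad {s : Set E} (hs : Convex ℝ s) {f g : E → ℝ} {x : E} (hx : x ∈ s)
    {gx : E} (hgrad : HasGradientAt f gx x) (hgconv : ConvexOn ℝ s g)
    (hmin : ∀ z ∈ s, f x + g x ≤ f z + g z) :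
    ∀ y ∈ s, g x + ⟪-gx, y - x⟫ ≤ g y := by
  intro y hy
  have h : -(g y - g x) ≤ ⟪gx, y - x⟫ := by
    apply grad_dir_ge hgrad
    intro t ht
    rw [le_div_iff₀ ht.1]
    have hmem : x + t • (y - x) = (1 - t) • x + t • y := by module
    have hgc := hgconv.2 hx hy (by linarith [ht.2] : (0:ℝ) ≤ 1 - t) (le_of_lt ht.1) (by ring)
    have hmm : (1 - t) • x + t • y ∈ s := hs hx hy (by linarith [ht.2]) (le_of_lt ht.1) (by ring)
    have hm2 := hmin _ hmm
    rw [hmem]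
    simp only [smul_eq_mul] at hgc; nlinarith [hgc, hm2]
  rw [inner_neg_left]
  linarith
end Aux

/-- **Proposition 1(i).** Under the blanket assumptions A1–A5 on Problem (P) and F1–F3 on the
approximants, a point `xs ∈ X` is a fixed point of the best-response map `x̂` if and only if
`xs` is a coordinate-wise stationary point of Problem (P). -/
theorem fixedPoint_iff_coordStationary
    {N : ℕ} {n : Fin N → ℕ} (Xi : ∀ i, Set (Blk n i))
    (X : Set (Full n)) (hXdef : X = {x : Full n | ∀ i, x i ∈ Xi i})
    (F G : Full n → ℝ) (Ftil : ∀ i, Blk n i → Full n → ℝ)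
    -- (A1) each X_i is nonempty, closed and convex
    (hXi : ∀ i, (Xi i).Nonempty ∧ IsClosed (Xi i) ∧ Convex ℝ (Xi i))
    -- (A2) F is C¹ on an open set containing X
    (U : Set (Full n)) (hUopen : IsOpen U) (hXU : X ⊆ U) (hFC1 : ContDiffOn ℝ 1 F U)
    -- (A3) ∇F is Lipschitz continuous on X with constant L_F
    (L_F : ℝ)
    (hLF : ∀ a ∈ X, ∀ b ∈ X, ‖gradient F a - gradient F b‖ ≤ L_F * ‖a - b‖)
    -- (A4) G is convex and continuous on X
    (hGconv : ConvexOn ℝ X G) (hGcont : ContinuousOn G X)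
    -- (A5) V = F + G is coercive
    (hcoercive : Tendsto (fun x => F x + G x) (cocompact (Full n)) atTop)
    -- (F1) each F̃_i(·; w) is strongly convex on X_i with constant q > 0, and differentiable
    (q : ℝ) (hq : 0 < q)
    (hF1 : ∀ i, ∀ w ∈ X, StrongConvexOn (Xi i) q (fun z => Ftil i z w))
    (hFtildiff : ∀ i, ∀ w ∈ X, Differentiable ℝ (fun z => Ftil i z w))
    -- (F2) gradient consistency: ∇F̃_i(x_i; x) = ∇_{x_i} F(x) for all x ∈ X
    (hF2 : ∀ i, ∀ x ∈ X, gradient (fun z => Ftil i z x) (x i) = pgrad F x i)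
    -- (F3) ∇F̃_i(z; ·) is Lipschitz continuous on X, uniformly in z ∈ X_i
    (L_B : ℝ)
    (hF3 : ∀ i, ∀ z ∈ Xi i, ∀ w ∈ X, ∀ w' ∈ X,
      ‖gradient (fun u => Ftil i u w) z - gradient (fun u => Ftil i u w') z‖ ≤ L_B * ‖w - w'‖)
    -- the best-response map: x̂_i(y) minimizes F̃_i(·; y) + G(·, y_{-i}) over X_i
    (xhat : Full n → Full n)
    (hxhat : ∀ y ∈ X, ∀ i, xhat y i ∈ Xi i ∧
      ∀ zi ∈ Xi i, Ftil i (xhat y i) y + G (upd y i (xhat y i)) ≤ Ftil i zi y + G (upd y i zi))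
    -- the point under consideration
    (xs : Full n) (hxs : xs ∈ X) :
    xhat xs = xs ↔ IsCoordStationaryPt Xi F G xs := by

  subst hXdef
  have hxsXi : ∀ i, xs i ∈ Xi i := hxs
  have hXiconv : ∀ i, Convex ℝ (Xi i) := fun i => (hXi i).2.2
  have hupdX : ∀ i, ∀ z ∈ Xi i, upd xs i z ∈ {x : Full n | ∀ j, x j ∈ Xi j} := by
    intro i z hz j
    by_cases h : j = i
    · subst h; simpa [upd] using hz
    · simpa [upd, Function.update_of_ne h] using hxsXi j
  have hgrad : ∀ i, HasGradientAt (fun z => Ftil i z xs) (pgrad F xs i) (xs i) := by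
    intro i
    have := ((hFtildiff i xs hxs) (xs i)).hasGradientAt
    rwa [hF2 i xs hxs] at this
  have hgconv : ∀ i, ConvexOn ℝ (Xi i) (fun z => G (upd xs i z)) := by
    intro i
    refine ⟨hXiconv i, ?_⟩
    intro z1 hz1 z2 hz2 a b ha hb hab
    have hupd : upd xs i (a • z1 + b • z2) = a • upd xs i z1 + b • upd xs i z2 := by
      refine PiLp.ext fun j => ?_
      by_cases h : j = i
      · subst h; simp [upd]
      · simp only [upd, WithLp.ofLp_toLp, Function.update_of_ne h, PiLp.add_apply, PiLp.smul_apply]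
        rw [← add_smul, hab, one_smul]
    simp only []
    rw [hupd]
    exact hGconv.2 (hupdX i z1 hz1) (hupdX i z2 hz2) ha hb hab
  constructor
  · intro hfix i
    have hmin0 := (hxhat xs hxs i).2
    rw [hfix] at hmin0
    refine ⟨-(pgrad F xs i), ?_, ?_⟩
    · exact min_subgrad (hXiconv i) (hxsXi i) (hgrad i) (hgconv i) hmin0
    · intro yi hyi
      simp
  · intro hstat
    refine PiLp.ext fun i => ?_
    obtain ⟨ξi, hsub, hVI⟩ := hstat i
    have haXi : xhat xs i ∈ Xi i := (hxhat xs hxs i).1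
    have hmin := (hxhat xs hxs i).2
    have hconvf : ConvexOn ℝ (Xi i) (fun z => Ftil i z xs) :=
      (hF1 i xs hxs).convexOn (fun r => by positivity)
    have hxsmin : ∀ z ∈ Xi i,
        Ftil i (xs i) xs + G (upd xs i (xs i)) ≤ Ftil i z xs + G (upd xs i z) := by
      intro z hz
      have h1 := convexOn_grad_le hconvf (hxsXi i) hz (hgrad i)
      have h2 := hsub z hz
      have h3 := hVI z hz
      have h4 : ⟪pgrad F xs i + ξi, z - xs i⟫ = ⟪pgrad F xs i, z - xs i⟫ + ⟪ξi, z - xs i⟫ :=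
        inner_add_left _ _ _
      simp only [] at h1 h2 ⊢
      rw [h4] at h3
      linarith
    have hva : Ftil i (xhat xs i) xs + G (upd xs i (xhat xs i))
        = Ftil i (xs i) xs + G (upd xs i (xs i)) :=
      le_antisymm (hmin (xs i) (hxsXi i)) (hxsmin (xhat xs i) haXi)
    have hSC := hF1 i xs hxs
    have hmemm : (1/2 : ℝ) • (xs i) + (1/2 : ℝ) • (xhat xs i) ∈ Xi i :=
      (hXiconv i) (hxsXi i) haXi (by norm_num) (by norm_num) (by norm_num)
    have h5 := hSC.2 (hxsXi i) haXi (by norm_num : (0:ℝ) ≤ 1/2) (by norm_num : (0:ℝ) ≤ 1/2)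
      (by norm_num)
    have h6 := (hgconv i).2 (hxsXi i) haXi (by norm_num : (0:ℝ) ≤ 1/2) (by norm_num : (0:ℝ) ≤ 1/2)
      (by norm_num)
    have h7 := hmin _ hmemm
    simp only [smul_eq_mul] at h5 h6
    have h8 : ‖xs i - xhat xs i‖ ^ 2 ≤ 0 := by nlinarith [norm_nonneg (xs i - xhat xs i)]
    have h9 : xs i - xhat xs i = 0 := by
      have := sq_nonneg ‖xs i - xhat xs i‖
      have hn0 : ‖xs i - xhat xs i‖ = 0 := by nlinarith
      exact norm_eq_zero.mp hn0
    have := sub_eq_zero.mp h9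
    exact this.symm
end

section
/- If G is convex on X and differentiable on a neighborhood of a point x* ∈ X that is a coordinate-wise stationary point of Problem (P), then x* is a stationary point of Problem (P). -/
open scoped RealInnerProductSpace
open Filter MeasureTheory ProbabilityTheory

-- auxiliary lemmas

lemma grad_inner {E : Type*} [NormedAddCommGroup E] [InnerProductSpace ℝ E] [CompleteSpace E]
    (f : E → ℝ) (x v : E) : ⟪gradient f x, v⟫ = fderiv ℝ f x v := by
  simp [gradient, InnerProductSpace.toDual_symm_apply]

lemma deriv_dir {E : Type*} [NormedAddCommGroup E] [NormedSpace ℝ E]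
    (g : E → ℝ) (x d : E) (hg : DifferentiableAt ℝ g x) :
    HasDerivAt (fun t : ℝ => g (x + t • d)) (fderiv ℝ g x d) 0 := by
  have hline : HasDerivAt (fun t : ℝ => x + t • d) d 0 := by
    simpa using ((hasDerivAt_id (0:ℝ)).smul_const d).const_add x
  have hg' : HasFDerivAt g (fderiv ℝ g x) (x + (0:ℝ) • d) := by
    simpa using hg.hasFDerivAt
  exact hg'.comp_hasDerivAt (f := fun t : ℝ => x + t • d) 0 hline

lemma slope_tendsto {E : Type*} [NormedAddCommGroup E] [NormedSpace ℝ E]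
    (g : E → ℝ) (x d : E) (hg : DifferentiableAt ℝ g x) :
    Tendsto (slope (fun t : ℝ => g (x + t • d)) 0) (nhdsWithin 0 (Set.Ioi (0:ℝ)))
      (nhds (fderiv ℝ g x d)) :=
  (hasDerivAt_iff_tendsto_slope.1 (deriv_dir g x d hg)).mono_left
    (nhdsWithin_mono 0 (show Set.Ioi (0:ℝ) ⊆ {(0:ℝ)}ᶜ from fun _ ht => ne_of_gt ht))

lemma fderiv_le_of_slope {E : Type*} [NormedAddCommGroup E] [NormedSpace ℝ E]
    (g : E → ℝ) (x d : E) (c : ℝ) (hg : DifferentiableAt ℝ g x)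
    (h : ∀ t : ℝ, t ∈ Set.Ioc 0 1 → g (x + t • d) - g x ≤ t * c) :
    fderiv ℝ g x d ≤ c := by
  refine le_of_tendsto (slope_tendsto g x d hg) ?_
  filter_upwards [Ioc_mem_nhdsGT_of_mem (Set.left_mem_Ico.2 one_pos)] with t ht
  have ht0 : (0:ℝ) < t := ht.1
  rw [slope_def_field, sub_zero, div_le_iff₀ ht0]
  calc g (x + t • d) - g (x + (0:ℝ) • d) = g (x + t • d) - g x := by simp
    _ ≤ t * c := h t ht
    _ = c * t := mul_comm _ _

lemma le_fderiv_of_slope {E : Type*} [NormedAddCommGroup E] [NormedSpace ℝ E]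
    (g : E → ℝ) (x d : E) (c : ℝ) (hg : DifferentiableAt ℝ g x)
    (h : ∀ t : ℝ, t ∈ Set.Ioc 0 1 → t * c ≤ g (x + t • d) - g x) :
    c ≤ fderiv ℝ g x d := by
  refine ge_of_tendsto (slope_tendsto g x d hg) ?_
  filter_upwards [Ioc_mem_nhdsGT_of_mem (Set.left_mem_Ico.2 one_pos)] with t ht
  have ht0 : (0:ℝ) < t := ht.1
  rw [slope_def_field, sub_zero, le_div_iff₀ ht0]
  calc c * t = t * c := mul_comm _ _
    _ ≤ g (x + t • d) - g x := h t ht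
    _ = g (x + t • d) - g (x + (0:ℝ) • d) := by simp

noncomputable def sing {N : ℕ} {n : Fin N → ℕ} (i : Fin N) : Blk n i →L[ℝ] Full n :=
  LinearMap.toContinuousLinearMap
    ((WithLp.linearEquiv 2 ℝ _).symm.toLinearMap ∘ₗ LinearMap.single ℝ (fun j => Blk n j) i)

lemma sing_apply {N : ℕ} {n : Fin N → ℕ} (i : Fin N) (v : Blk n i) (j : Fin N) :
    (sing i v : Full n) j = if h : j = i then h ▸ v else 0 := by
  show Pi.single i v j = _
  split
  · next h => subst h; simp
  · next h => exact Pi.single_eq_of_ne h v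

lemma inner_sing {N : ℕ} {n : Fin N → ℕ} (i : Fin N) (v : Blk n i) (w : Full n) :
    ⟪(sing i v : Full n), w⟫ = ⟪v, w i⟫ := by
  rw [PiLp.inner_apply, Finset.sum_eq_single i]
  · simp [sing_apply]
  · intro j _ hj
    simp [sing_apply, hj]
  · simp

lemma upd_eq {N : ℕ} {n : Fin N → ℕ} (x : Full n) (i : Fin N) (z : Blk n i) :
    (upd x i z : Full n) = x + sing i (z - x i) := by
  rw [WithLp.ext_iff]; funext j
  show Function.update x.ofLp i z j = _
  simp only [Function.update_apply, PiLp.add_apply, sing_apply]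
  split
  · next h => subst h; simp
  · next h => simp [h]

lemma hasFDerivAt_upd {N : ℕ} {n : Fin N → ℕ} (x : Full n) (i : Fin N) :
    HasFDerivAt (fun z => upd x i z) (sing i : Blk n i →L[ℝ] Full n) (x i) := by
  have h : HasFDerivAt (fun z : Blk n i => x + sing i (z - x i))
      (sing i : Blk n i →L[ℝ] Full n) (x i) := by
    have := ((sing (n := n) i).hasFDerivAt (x := x i - x i)).comp
      (f := fun z : Blk n i => z - x i) (x i)
      ((hasFDerivAt_id (x i)).sub_const (x i))
    simpa using this.const_add x
  exact h.congr_of_eventuallyEq (Filter.Eventually.of_forall fun z => (upd_eq x i z))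

lemma upd_self {N : ℕ} {n : Fin N → ℕ} (x : Full n) (i : Fin N) : upd x i (x i) = x := by
  unfold upd; rw [Function.update_eq_self]

/-- If `G` is convex on `X` and differentiable on a neighborhood of a point `xs ∈ X` that is
a coordinate-wise stationary point of Problem (P), then `xs` is a stationary point of
Problem (P). -/
theorem coordStationary_of_differentiable
    {N : ℕ} {n : Fin N → ℕ} (Xi : ∀ i, Set (Blk n i))
    (X : Set (Full n)) (hXdef : X = {x : Full n | ∀ i, x i ∈ Xi i})
    (F G : Full n → ℝ)
    -- each X_i is nonempty, closed and convex
    (hXi : ∀ i, (Xi i).Nonempty ∧ IsClosed (Xi i) ∧ Convex ℝ (Xi i))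
    -- F is C¹ on an open set containing X
    (U : Set (Full n)) (hUopen : IsOpen U) (hXU : X ⊆ U) (hFC1 : ContDiffOn ℝ 1 F U)
    -- G is convex and continuous on X
    (hGconv : ConvexOn ℝ X G) (hGcont : ContinuousOn G X)
    -- the point under consideration
    (xs : Full n) (hxs : xs ∈ X)
    -- G is differentiable on a neighborhood of xs
    (W : Set (Full n)) (hWopen : IsOpen W) (hxsW : xs ∈ W) (hGdiff : DifferentiableOn ℝ G W)
    (hcoord : IsCoordStationaryPt Xi F G xs) :
    IsStationaryPt X F G xs := by
  have hF : DifferentiableAt ℝ F xs :=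
    (hFC1.contDiffAt (hUopen.mem_nhds (hXU hxs))).differentiableAt one_ne_zero
  have hG : DifferentiableAt ℝ G xs := hGdiff.differentiableAt (hWopen.mem_nhds hxsW)
  have hxs' : ∀ i, xs i ∈ Xi i := by rw [hXdef] at hxs; exact hxs
  refine ⟨gradient G xs, ?_, ?_⟩
  · -- subgradient property
    intro y hy
    have key : fderiv ℝ G xs (y - xs) ≤ G y - G xs := by
      apply fderiv_le_of_slope G xs (y - xs) _ hG
      intro t ht
      have hcomb : xs + t • (y - xs) = (1 - t) • xs + t • y := by module
      have hconvX : Convex ℝ X := by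
        rw [hXdef]
        intro a ha b hb p q hp hq hpq i
        have : (p • a + q • b) i = p • (a i) + q • (b i) := rfl
        rw [this]
        exact (hXi i).2.2 (ha i) (hb i) hp hq hpq
      have hGle : G ((1 - t) • xs + t • y) ≤ (1 - t) * G xs + t * G y :=
        hGconv.2 hxs hy (by linarith [ht.2]) (le_of_lt ht.1) (by ring)
      rw [hcomb]
      nlinarith [hGle]
    rw [grad_inner]
    linarith
  · -- first-order optimality
    intro y hy
    have hy' : ∀ i, y i ∈ Xi i := by rw [hXdef] at hy; exact hy
    rw [PiLp.inner_apply]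
    apply Finset.sum_nonneg
    intro i _
    obtain ⟨ξi, hsub, hst⟩ := hcoord i
    set d := y i - xs i with hd
    have hu := hasFDerivAt_upd xs i
    have hF' : HasFDerivAt F (fderiv ℝ F xs) (upd xs i (xs i)) := by
      rw [upd_self]; exact hF.hasFDerivAt
    have hG' : HasFDerivAt G (fderiv ℝ G xs) (upd xs i (xs i)) := by
      rw [upd_self]; exact hG.hasFDerivAt
    have hFi : HasFDerivAt (fun z => F (upd xs i z)) ((fderiv ℝ F xs).comp (sing i)) (xs i) :=
      hF'.comp (xs i) hu
    have hGi : HasFDerivAt (fun z => G (upd xs i z)) ((fderiv ℝ G xs).comp (sing i)) (xs i) :=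
      hG'.comp (xs i) hu
    have hsingF : ∀ v : Blk n i, fderiv ℝ F xs (sing i v) = ⟪(gradient F xs) i, v⟫ := by
      intro v
      rw [← grad_inner F xs (sing i v), real_inner_comm, inner_sing, real_inner_comm]
    have hsingG : ∀ v : Blk n i, fderiv ℝ G xs (sing i v) = ⟪(gradient G xs) i, v⟫ := by
      intro v
      rw [← grad_inner G xs (sing i v), real_inner_comm, inner_sing, real_inner_comm]
    have hpF : ⟪pgrad F xs i, d⟫ = ⟪(gradient F xs) i, d⟫ := by
      rw [pgrad, grad_inner, hFi.fderiv]
      exact hsingF d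
    have hle : ⟪ξi, d⟫ ≤ ⟪(gradient G xs) i, d⟫ := by
      have h1 : ⟪ξi, d⟫ ≤ fderiv ℝ (fun z => G (upd xs i z)) (xs i) d := by
        apply le_fderiv_of_slope _ _ _ _ hGi.differentiableAt
        intro t ht
        have hmem : xs i + t • d ∈ Xi i := by
          have hcomb : xs i + t • d = (1 - t) • (xs i) + t • (y i) := by rw [hd]; module
          rw [hcomb]
          exact (hXi i).2.2 (hxs' i) (hy' i) (by linarith [ht.2]) (le_of_lt ht.1) (by ring)
        have hs := hsub _ hmem
        simp only at hs
        have hin : ⟪ξi, (xs i + t • d) - xs i⟫ = t * ⟪ξi, d⟫ := by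
          rw [add_sub_cancel_left, real_inner_smul_right]
        rw [hin] at hs
        linarith
      rwa [hGi.fderiv, ContinuousLinearMap.comp_apply, hsingG d] at h1
    have h0 := hst (y i) (hy' i)
    rw [inner_add_left] at h0
    have hgoal : ⟪(gradient F xs + gradient G xs) i, (y - xs) i⟫
        = ⟪(gradient F xs) i, d⟫ + ⟪(gradient G xs) i, d⟫ := by
      have h1 : (gradient F xs + gradient G xs) i = (gradient F xs) i + (gradient G xs) i := rfl
      have h2 : (y - xs) i = d := rfl
      rw [h1, h2, inner_add_left]
    rw [hgoal]
    linarith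
end

section
/- Let (Ω, ℱ, P) be a probability space and (A_k)_{k∈ℕ} a sequence of mutually independent events with P(A_k) ≥ p for all k, for some p > 0. Let (γ_k)_{k∈ℕ} be a deterministic sequence with γ_k ∈ (0,1] for all k, γ_k → 0, and ∑_{k=0}^∞ γ_k = +∞. Then P( ∑_{k : ω ∈ A_k} γ_k < +∞ ) = 0; that is, almost surely the sum of γ_k over the random index set {k : ω ∈ A_k} diverges. -/
open Filter MeasureTheory ProbabilityTheory

set_option maxHeartbeats 1000000 in
/-- **Almost-sure nonsummability over a random index set.** Let `(Ω, ℱ, P)` be a probability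
space and `(A_k)` a sequence of mutually independent events with `P(A_k) ≥ p` for all `k`, for
some `p > 0`. Let `(γ_k)` be a deterministic sequence with `γ_k ∈ (0,1]`, `γ_k → 0` and
`∑_k γ_k = +∞`. Then `P(∑_{k : ω ∈ A_k} γ_k < +∞) = 0`: almost surely, the sum of `γ_k` over
the random index set `{k | ω ∈ A_k}` diverges. -/
theorem measure_summable_over_random_set_eq_zero
    {Ω : Type*} [MeasurableSpace Ω] (P : Measure Ω) [IsProbabilityMeasure P]
    (A : ℕ → Set Ω) (hA : ∀ k, MeasurableSet (A k))
    (hIndep : iIndepSet A P)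
    (p : ℝ) (hp : 0 < p) (hAp : ∀ k, ENNReal.ofReal p ≤ P (A k))
    (γ : ℕ → ℝ) (hγ1 : ∀ k, γ k ∈ Set.Ioc (0 : ℝ) 1)
    (hγ2 : Tendsto γ atTop (nhds 0))
    (hγ3 : Tendsto (fun m => ∑ k ∈ Finset.range m, γ k) atTop atTop) :
    P {ω | Summable fun k => Set.indicator (A k) (fun _ => γ k) ω} = 0 := by
  classical
  set X : ℕ → Ω → ℝ := fun k => (A k).indicator (fun _ => γ k) with hX
  have hXmeas : ∀ k, Measurable (X k) := fun k =>
    (measurable_const.indicator (hA k))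
  have hXnonneg : ∀ k ω, 0 ≤ X k ω := fun k ω =>
    Set.indicator_nonneg (fun _ _ => (hγ1 k).1.le) ω
  have hXle : ∀ k ω, X k ω ≤ γ k := fun k ω => by
    by_cases h : ω ∈ A k
    · simp [X, Set.indicator_of_mem h]
    · simp [X, Set.indicator_of_notMem h, (hγ1 k).1.le]
  -- independence of the X k
  have hIndepX : iIndepFun X P := by
    have h1 := hIndep.iIndepFun_indicator (β := ℝ) (m := inferInstance)
    have h2 := h1.comp (fun k (x : ℝ) => γ k * x) (fun k => measurable_const_mul _)
    convert h2 using 2 with k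
    funext ω
    by_cases h : ω ∈ A k <;>
      simp [X, Function.comp, Set.indicator_of_mem, Set.indicator_of_notMem, h]
  set c : ℝ := 1 - Real.exp (-1) with hc
  have hcpos : 0 < c := by
    have : Real.exp (-1) < 1 := Real.exp_lt_one_iff.2 (by norm_num)
    linarith
  -- bound on each mgf factor
  have hp1 : p ≤ 1 := by
    have := (hAp 0).trans (prob_le_one (μ := P) (s := A 0))
    have := (ENNReal.ofReal_le_one).1 this
    linarith
  have hfactor : ∀ k, mgf (X k) P (-1) ≤ Real.exp (-(p * c * γ k)) := by
    intro k
    have hγk := hγ1 k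
    -- compute the mgf
    have hrw : (fun ω => Real.exp ((-1) * X k ω)) =
        fun ω => (A k).indicator (fun _ => Real.exp (-(γ k)) - 1) ω + 1 := by
      funext ω
      by_cases h : ω ∈ A k <;>
        simp [X, Set.indicator_of_mem, Set.indicator_of_notMem, h]
    have hint : Integrable ((A k).indicator (fun _ => Real.exp (-(γ k)) - 1)) P :=
      (integrable_const _).indicator (hA k)
    have hmgf : mgf (X k) P (-1)
        = (Real.exp (-(γ k)) - 1) * (P (A k)).toReal + 1 := by
      rw [mgf]
      rw [hrw, integral_add hint (integrable_const 1), integral_indicator_const _ (hA k)]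
      simp [mul_comm, measureReal_def]
    rw [hmgf]
    -- convexity: exp(-γ) ≤ 1 - c γ for γ ∈ [0,1]
    have hconv : Real.exp (-(γ k)) ≤ 1 - c * γ k := by
      have h := convexOn_exp.2 (Set.mem_univ (-1 : ℝ)) (Set.mem_univ (0 : ℝ))
        hγk.1.le (by linarith [hγk.2] : (0:ℝ) ≤ 1 - γ k) (by ring)
      simp only [smul_eq_mul, mul_zero, add_zero, Real.exp_zero, mul_one] at h
      calc Real.exp (-(γ k)) = Real.exp (γ k * (-1) + (1 - γ k) * 0) := by ring_nf
        _ ≤ γ k * Real.exp (-1) + (1 - γ k) * 1 := by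
            simpa using h
        _ = 1 - c * γ k := by rw [hc]; ring
    have hq1 : (P (A k)).toReal ≤ 1 := by
      have := prob_le_one (μ := P) (s := A k)
      simpa using ENNReal.toReal_le_of_le_ofReal (by norm_num) (by simpa using this)
    have hqp : p ≤ (P (A k)).toReal := by
      have := hAp k
      have h' := ENNReal.toReal_mono (measure_ne_top P (A k)) this
      rwa [ENNReal.toReal_ofReal hp.le] at h'
    have hmid : (Real.exp (-(γ k)) - 1) * (P (A k)).toReal + 1 ≤ 1 - p * c * γ k := by
      have h1 : Real.exp (-(γ k)) - 1 ≤ -(c * γ k) := by linarith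
      nlinarith [hγk.1, mul_pos hcpos hγk.1, hqp, hq1]
    have h2 : 1 - p * c * γ k ≤ Real.exp (-(p * c * γ k)) := by
      have := Real.add_one_le_exp (-(p * c * γ k))
      linarith
    linarith
  -- the integral of the product tends to 0
  set b : ℕ → ℝ := fun n => Real.exp (-(p * c * ∑ k ∈ Finset.range n, γ k)) with hb
  have hmgfsum : ∀ n, mgf (∑ k ∈ Finset.range n, X k) P (-1) ≤ b n := by
    intro n
    rw [hIndepX.mgf_sum hXmeas]
    calc ∏ k ∈ Finset.range n, mgf (X k) P (-1)
        ≤ ∏ k ∈ Finset.range n, Real.exp (-(p * c * γ k)) :=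
          Finset.prod_le_prod (fun k _ => mgf_nonneg) (fun k _ => hfactor k)
      _ = b n := by
          rw [← Real.exp_sum, hb]
          congr 1
          simp [Finset.mul_sum]
  have hbto : Tendsto b atTop (nhds 0) := by
    have h1 : Tendsto (fun n => -(p * c * ∑ k ∈ Finset.range n, γ k)) atTop atBot :=
      tendsto_neg_atTop_atBot.comp (hγ3.const_mul_atTop (mul_pos hp hcpos))
    exact Real.tendsto_exp_atBot.comp h1
  -- the sets E_m
  set S : ℕ → Ω → ℝ := fun n ω => ∑ k ∈ Finset.range n, X k ω with hS
  have hSmeas : ∀ n, Measurable (S n) := fun n =>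
    Finset.measurable_sum _ (fun k _ => hXmeas k)
  have hSnonneg : ∀ n ω, 0 ≤ S n ω := fun n ω =>
    Finset.sum_nonneg fun k _ => hXnonneg k ω
  set E : ℕ → Set Ω := fun m => ⋂ n, {ω | S n ω ≤ (m : ℝ)} with hE
  have hEmeas : ∀ m, MeasurableSet (E m) := fun m =>
    MeasurableSet.iInter fun n => measurableSet_le (hSmeas n) measurable_const
  have hEzero : ∀ m, P (E m) = 0 := by
    intro m
    have key : ∀ n, Real.exp (-(m : ℝ)) * (P (E m)).toReal ≤ b n := by
      intro n
      refine le_trans ?_ (hmgfsum n)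
      have hpt : (fun ω => Real.exp ((-1 : ℝ) * (∑ k ∈ Finset.range n, X k) ω))
          = fun ω => Real.exp (-(S n ω)) := by
        funext ω
        rw [Finset.sum_apply]
        norm_num [S]
      have hmgf_eq : mgf (∑ k ∈ Finset.range n, X k) P (-1)
          = ∫ ω, Real.exp (-(S n ω)) ∂P := by
        rw [mgf, hpt]
      rw [hmgf_eq]
      have hFint : Integrable (fun ω => Real.exp (-(S n ω))) P := by
        refine (integrable_const (1 : ℝ)).mono' ?_ ?_
        · exact ((hSmeas n).neg.exp).aestronglyMeasurable
        · refine Filter.Eventually.of_forall fun ω => ?_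
          rw [Real.norm_eq_abs, abs_of_pos (Real.exp_pos _), Real.exp_le_one_iff]
          linarith [hSnonneg n ω]
      have hmono : ∀ ω, (E m).indicator (fun _ => Real.exp (-(m:ℝ))) ω
          ≤ Real.exp (-(S n ω)) := by
        intro ω
        by_cases h : ω ∈ E m
        · rw [Set.indicator_of_mem h]
          have hω : S n ω ≤ (m : ℝ) := Set.mem_iInter.1 h n
          exact Real.exp_le_exp.2 (neg_le_neg hω)
        · rw [Set.indicator_of_notMem h]
          exact (Real.exp_pos _).le
      have hII : Integrable ((E m).indicator (fun _ => Real.exp (-(m:ℝ)))) P :=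
        (integrable_const _).indicator (hEmeas m)
      calc Real.exp (-(m : ℝ)) * (P (E m)).toReal
          = ∫ ω, (E m).indicator (fun _ => Real.exp (-(m:ℝ))) ω ∂P := by
            rw [integral_indicator_const _ (hEmeas m)]; simp [mul_comm, measureReal_def]
        _ ≤ ∫ ω, Real.exp (-(S n ω)) ∂P := integral_mono hII hFint hmono
    have hle0 : Real.exp (-(m : ℝ)) * (P (E m)).toReal ≤ 0 :=
      ge_of_tendsto' hbto key
    have htr : (P (E m)).toReal = 0 := by
      have h0 : 0 ≤ (P (E m)).toReal := ENNReal.toReal_nonneg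
      nlinarith [Real.exp_pos (-(m:ℝ))]
    exact (ENNReal.toReal_eq_zero_iff _).1 htr |>.resolve_right (measure_ne_top P _)
  -- conclude
  have hsub : {ω | Summable fun k => X k ω} ⊆ ⋃ m, E m := by
    intro ω hω
    have hsum : Summable fun k => X k ω := hω
    set T := ∑' k, X k ω with hT
    refine Set.mem_iUnion.2 ⟨⌈T⌉₊, Set.mem_iInter.2 fun n => ?_⟩
    have h1 : S n ω ≤ T := Summable.sum_le_tsum (Finset.range n) (fun k _ => hXnonneg k ω) hsum
    exact h1.trans (Nat.le_ceil T)
  have hle : P {ω | Summable fun k => X k ω} ≤ P (⋃ m, E m) := measure_mono hsub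
  rw [measure_iUnion_null hEzero] at hle
  exact le_antisymm hle zero_le
end

section
/- Suppose G is separable: G(x) = ∑_{i=1}^N G_i(x_i) with each G_i convex and continuous on X_i. Then the best-response mapping y ↦ x̂(y) is Lipschitz continuous on X: there exists a constant L̂ > 0 such that ‖x̂(y) − x̂(z)‖ ≤ L̂ ‖y − z‖ for all y, z ∈ X. -/
open scoped RealInnerProductSpace
open Filter MeasureTheory ProbabilityTheory

lemma quad_growth_aux {E : Type*} [NormedAddCommGroup E] [NormedSpace ℝ E]
    {s : Set E} {q : ℝ} {h : E → ℝ} (hs : StrongConvexOn s q h)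
    {u v : E} (hu : u ∈ s) (hv : v ∈ s) (hmin : ∀ z ∈ s, h u ≤ h z) :
    h u + q / 2 * ‖u - v‖ ^ 2 ≤ h v := by
  set X : ℝ := q / 2 * ‖u - v‖ ^ 2 with hX
  have key : ∀ a ∈ Set.Ioo (0:ℝ) 1, a * X ≤ h v - h u := by
    intro a ha
    have hb : (0:ℝ) < 1 - a := by linarith [ha.2]
    have hmem : a • u + (1 - a) • v ∈ s := hs.1 hu hv (le_of_lt ha.1) (le_of_lt hb) (by ring)
    have h1 := hs.2 hu hv (le_of_lt ha.1) (le_of_lt hb) (by ring : a + (1-a) = 1)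
    have h2 := hmin _ hmem
    have h3 : h u ≤ a * h u + (1 - a) * h v - a * (1 - a) * X := by
      simpa [smul_eq_mul, hX] using h2.trans h1
    have hring : (1-a) * (h v - a * X) = (1-a) * (h v) - a * (1-a) * X := by ring
    have h5 : h u ≤ h v - a * X := by
      have h4 : (1-a) * (h u) ≤ (1-a) * (h v - a * X) := by rw [hring]; linarith
      exact (mul_le_mul_iff_right₀ hb).mp h4
    linarith
  have ht : Filter.Tendsto (fun a : ℝ => a * X) (nhdsWithin 1 (Set.Iio 1)) (nhds (1 * X)) :=
    ((continuous_id.mul continuous_const).tendsto 1).mono_left nhdsWithin_le_nhds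
  have hev : ∀ᶠ a in nhdsWithin (1:ℝ) (Set.Iio 1), a * X ≤ h v - h u := by
    filter_upwards [Ioo_mem_nhdsLT_of_mem (Set.mem_Ioc.mpr ⟨one_pos, le_refl (1:ℝ)⟩)] with a ha
    exact key a ha
  have := le_of_tendsto ht hev
  linarith

/-- **Lipschitz continuity of the best-response map (separable `G`).** If `G` is separable,
`G x = ∑ i, G_i (x_i)` with each `G_i` convex and continuous on `X_i`, then under F1–F3 the
best-response map `y ↦ x̂(y)` is Lipschitz continuous on `X`: there is `L̂ > 0` with
`‖x̂(y) − x̂(z)‖ ≤ L̂ ‖y − z‖` for all `y, z ∈ X`. -/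
theorem best_response_lipschitz
    {N : ℕ} {n : Fin N → ℕ} (Xi : ∀ i, Set (Blk n i))
    (X : Set (Full n)) (hXdef : X = {x : Full n | ∀ i, x i ∈ Xi i})
    (F : Full n → ℝ) (Ftil : ∀ i, Blk n i → Full n → ℝ)
    -- each X_i is nonempty, closed and convex
    (hXi : ∀ i, (Xi i).Nonempty ∧ IsClosed (Xi i) ∧ Convex ℝ (Xi i))
    -- F is C¹ on an open set containing X, with ∇F Lipschitz on X
    (U : Set (Full n)) (hUopen : IsOpen U) (hXU : X ⊆ U) (hFC1 : ContDiffOn ℝ 1 F U)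
    (L_F : ℝ)
    (hLF : ∀ a ∈ X, ∀ b ∈ X, ‖gradient F a - gradient F b‖ ≤ L_F * ‖a - b‖)
    -- G is separable with convex continuous blocks
    (Gi : ∀ i, Blk n i → ℝ)
    (hGi : ∀ i, ConvexOn ℝ (Xi i) (Gi i) ∧ ContinuousOn (Gi i) (Xi i))
    -- (F1) each F̃_i(·; w) is strongly convex on X_i with constant q > 0, and differentiable
    (q : ℝ) (hq : 0 < q)
    (hF1 : ∀ i, ∀ w ∈ X, StrongConvexOn (Xi i) q (fun z => Ftil i z w))
    (hFtildiff : ∀ i, ∀ w ∈ X, Differentiable ℝ (fun z => Ftil i z w))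
    -- (F2) gradient consistency: ∇F̃_i(x_i; x) = ∇_{x_i} F(x) for all x ∈ X
    (hF2 : ∀ i, ∀ x ∈ X, gradient (fun z => Ftil i z x) (x i) = pgrad F x i)
    -- (F3) ∇F̃_i(z; ·) is Lipschitz continuous on X, uniformly in z ∈ X_i
    (L_B : ℝ)
    (hF3 : ∀ i, ∀ z ∈ Xi i, ∀ w ∈ X, ∀ w' ∈ X,
      ‖gradient (fun u => Ftil i u w) z - gradient (fun u => Ftil i u w') z‖ ≤ L_B * ‖w - w'‖)
    -- the best-response map: x̂_i(y) minimizes F̃_i(·; y) + G_i(·) over X_i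
    (xhat : Full n → Full n)
    (hxhat : ∀ y ∈ X, ∀ i, xhat y i ∈ Xi i ∧
      ∀ zi ∈ Xi i, Ftil i (xhat y i) y + Gi i (xhat y i) ≤ Ftil i zi y + Gi i zi) :
    ∃ Lhat > (0 : ℝ), ∀ y ∈ X, ∀ w ∈ X, ‖xhat y - xhat w‖ ≤ Lhat * ‖y - w‖ := by
  
  set C : ℝ := max (L_B / q) 1 with hC
  have hCpos : 0 < C := lt_of_lt_of_le one_pos (le_max_right _ _)
  refine ⟨Real.sqrt N * C + 1, by positivity, ?_⟩
  intro y hy w hw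
  have key : ∀ i, ‖xhat y i - xhat w i‖ ≤ C * ‖y - w‖ := by
    intro i
    set u := xhat y i with hu'
    set v := xhat w i with hv'
    have hu : u ∈ Xi i := (hxhat y hy i).1
    have hv : v ∈ Xi i := (hxhat w hw i).1
    have hsumy : StrongConvexOn (Xi i) q ((fun z => Ftil i z y) + Gi i) :=
      ((hF1 i y hy).add ((hGi i).1.uniformConvexOn_zero)).mono (fun r => by simp)
    have hsumw : StrongConvexOn (Xi i) q ((fun z => Ftil i z w) + Gi i) :=
      ((hF1 i w hw).add ((hGi i).1.uniformConvexOn_zero)).mono (fun r => by simp)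
    have q1 := quad_growth_aux hsumy hu hv (fun z hz => (hxhat y hy i).2 z hz)
    have q2 := quad_growth_aux hsumw hv hu (fun z hz => (hxhat w hw i).2 z hz)
    simp only [Pi.add_apply] at q1 q2
    rw [norm_sub_rev v u] at q2
    set g : Blk n i → ℝ := fun z => Ftil i z y - Ftil i z w with hg
    have hdiff : ∀ z, DifferentiableAt ℝ g z :=
      fun z => ((hFtildiff i y hy) z).sub ((hFtildiff i w hw) z)
    have bound : ∀ z ∈ Xi i, ‖fderiv ℝ g z‖ ≤ L_B * ‖y - w‖ := by
      intro z hz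
      have e1 : fderiv ℝ g z
          = fderiv ℝ (fun u => Ftil i u y) z - fderiv ℝ (fun u => Ftil i u w) z :=
        fderiv_sub ((hFtildiff i y hy) z) ((hFtildiff i w hw) z)
      have e2 : ∀ f : Blk n i → ℝ,
          (InnerProductSpace.toDual ℝ (Blk n i)) (gradient f z) = fderiv ℝ f z :=
        fun f => (InnerProductSpace.toDual ℝ (Blk n i)).apply_symm_apply _
      calc ‖fderiv ℝ g z‖
          = ‖gradient (fun u => Ftil i u y) z - gradient (fun u => Ftil i u w) z‖ := by
            rw [e1, ← e2, ← e2, ← map_sub]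
            exact LinearIsometryEquiv.norm_map _ _
        _ ≤ L_B * ‖y - w‖ := hF3 i z hz y hy w hw
    have mv : ‖g v - g u‖ ≤ (L_B * ‖y - w‖) * ‖v - u‖ :=
      (hXi i).2.2.norm_image_sub_le_of_norm_fderiv_le (fun z _ => hdiff z) bound hu hv
    rw [norm_sub_rev v u, Real.norm_eq_abs] at mv
    have hgv : g v = Ftil i v y - Ftil i v w := rfl
    have hgu : g u = Ftil i u y - Ftil i u w := rfl
    have hkey : q * ‖u - v‖ ^ 2 ≤ g v - g u := by rw [hgv, hgu]; linarith
    have hkey2 : q * ‖u - v‖ ^ 2 ≤ (L_B * ‖y - w‖) * ‖u - v‖ :=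
      hkey.trans ((le_abs_self _).trans mv)
    rcases eq_or_lt_of_le (norm_nonneg (u - v)) with h0 | hd
    · have h00 : ‖u - v‖ = 0 := h0.symm
      rw [h00]
      positivity
    · have h1 : q * ‖u - v‖ ≤ L_B * ‖y - w‖ :=
        le_of_mul_le_mul_right (by nlinarith [hkey2]) hd
      have h2 : ‖u - v‖ ≤ (L_B / q) * ‖y - w‖ := by
        rw [div_mul_eq_mul_div, le_div_iff₀ hq]; linarith
      exact h2.trans (mul_le_mul_of_nonneg_right (le_max_left _ _) (norm_nonneg _))
  have hsq : ‖xhat y - xhat w‖ ^ 2 ≤ (N : ℝ) * (C * ‖y - w‖) ^ 2 := by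
    rw [PiLp.norm_sq_eq_of_L2]
    calc ∑ i, ‖(xhat y - xhat w) i‖ ^ 2
        ≤ ∑ _i : Fin N, (C * ‖y - w‖) ^ 2 := by
          refine Finset.sum_le_sum (fun i _ => ?_)
          have hi : (xhat y - xhat w) i = xhat y i - xhat w i := rfl
          rw [hi]
          exact pow_le_pow_left₀ (norm_nonneg _) (key i) 2
      _ = (N : ℝ) * (C * ‖y - w‖) ^ 2 := by
          simp [Finset.sum_const, Finset.card_univ, nsmul_eq_mul]
  have h3 : ‖xhat y - xhat w‖ ≤ Real.sqrt N * C * ‖y - w‖ := by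
    apply le_of_pow_le_pow_left₀ two_ne_zero
      (mul_nonneg (mul_nonneg (Real.sqrt_nonneg _) hCpos.le) (norm_nonneg _))
    have e : (Real.sqrt N * C * ‖y - w‖) ^ 2 = (N : ℝ) * (C * ‖y - w‖) ^ 2 := by
      rw [mul_pow, mul_pow, Real.sq_sqrt (Nat.cast_nonneg N)]; ring
    rw [e]; exact hsq
  nlinarith [norm_nonneg (y - w), h3,
    mul_nonneg (mul_nonneg (Real.sqrt_nonneg (N:ℝ)) hCpos.le) (norm_nonneg (y - w))]
end

section
/- Let x ∈ X, let i_mx be an index attaining max_{i∈{1,…,N}} ‖x̂_i(x) − x_i‖, let S ⊆ {1,…,N} be a set containing i_mx, let ρ ∈ (0,1], and let Ŝ ⊆ S contain at least one index j with E_j(x) ≥ ρ · max_{i∈S} E_i(x). Then ‖(x̂(x) − x)_Ŝ‖ ≥ c₁ ‖x̂(x) − x‖, where (v)_Ŝ denotes the vector whose i-th block equals v_i if i ∈ Ŝ and zero otherwise, and c₁ = ρ (min_{i} s̲_i) / (N · max_{i} s̄_i) > 0. -/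
open scoped RealInnerProductSpace
open Filter MeasureTheory ProbabilityTheory

/-- **Lower bound for the greedy subselection.** Let `x ∈ X`, let `i_mx` attain
`max_i ‖x̂_i(x) − x_i‖`, let `S` contain `i_mx`, and let `Ŝ ⊆ S` contain at least one index `j`
with `E_j(x) ≥ ρ · max_{i ∈ S} E_i(x)`. Then
`‖(x̂(x) − x)_Ŝ‖ ≥ c₁ ‖x̂(x) − x‖` with `c₁ = ρ (min_i s̲_i) / (N · max_i s̄_i) > 0`, where
`(v)_Ŝ` has `i`-th block `v_i` for `i ∈ Ŝ` and zero otherwise. -/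
theorem greedy_subselection_bound
    {N : ℕ} {n : Fin N → ℕ} (Xi : ∀ i, Set (Blk n i))
    (X : Set (Full n)) (hXdef : X = {x : Full n | ∀ i, x i ∈ Xi i})
    (hXi : ∀ i, (Xi i).Nonempty ∧ IsClosed (Xi i) ∧ Convex ℝ (Xi i))
    -- a best-response map with values in the blocks X_i
    (xhat : Full n → Full n) (hxhatX : ∀ y ∈ X, ∀ i, xhat y i ∈ Xi i)
    -- error-bound functions with constants 0 < s̲_i ≤ s̄_i
    (E : Fin N → Full n → ℝ) (slo shi : Fin N → ℝ)
    (hs : ∀ i, 0 < slo i ∧ slo i ≤ shi i)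
    (hE : ∀ i, ∀ y ∈ X,
      slo i * ‖xhat y i - y i‖ ≤ E i y ∧ E i y ≤ shi i * ‖xhat y i - y i‖)
    -- the data of the selection
    (x : Full n) (hx : x ∈ X)
    (imx : Fin N) (himx : ∀ i, ‖xhat x i - x i‖ ≤ ‖xhat x imx - x imx‖)
    (S Shat : Finset (Fin N)) (himxS : imx ∈ S) (hsub : Shat ⊆ S)
    (ρ : ℝ) (hρ : ρ ∈ Set.Ioc (0 : ℝ) 1)
    (hgreedy : ∃ i ∈ Shat, ∀ j ∈ S, ρ * E j x ≤ E i x) :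
    ρ * (⨅ i, slo i) / (N * ⨆ i, shi i) * ‖xhat x - x‖ ≤
      ‖(show Full n from WithLp.toLp 2 (fun j => if j ∈ Shat then xhat x j - x j else 0))‖ := by

  obtain ⟨i₀, hi₀S, hi₀⟩ := hgreedy
  have hρ0 : 0 < ρ := hρ.1
  haveI : Nonempty (Fin N) := ⟨imx⟩
  have hN : 0 < (N : ℝ) := by exact_mod_cast imx.pos
  set M : ℝ := ‖xhat x imx - x imx‖ with hM
  set w : Full n := WithLp.toLp 2 (fun j => if j ∈ Shat then xhat x j - x j else 0) with hwdef
  have hA : (⨅ i, slo i) ≤ slo imx := ciInf_le (Finite.bddBelow_range _) imx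
  have hApos : 0 < ⨅ i, slo i := by
    obtain ⟨i, hi⟩ := Finite.exists_min slo
    have : slo i ≤ ⨅ j, slo j := le_ciInf hi
    exact lt_of_lt_of_le (hs i).1 this
  have hB : shi i₀ ≤ ⨆ i, shi i := le_ciSup (Finite.bddAbove_range _) i₀
  have hBpos : 0 < ⨆ i, shi i :=
    lt_of_lt_of_le (lt_of_lt_of_le (hs i₀).1 (hs i₀).2) hB
  -- K1 : ‖xhat x - x‖ ≤ N * M
  have hK1 : ‖xhat x - x‖ ≤ N * M := by
    have hsq : ‖xhat x - x‖ ^ 2 ≤ (N * M) ^ 2 := by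
      rw [PiLp.norm_sq_eq_of_L2]
      have h1 : ∑ i, ‖(xhat x - x) i‖ ^ 2 ≤ ∑ _i : Fin N, M ^ 2 := by
        apply Finset.sum_le_sum
        intro i _
        have := himx i
        have h0 : (0:ℝ) ≤ ‖xhat x i - x i‖ := norm_nonneg _
        simp only [PiLp.sub_apply]
        nlinarith
      simp only [Finset.sum_const, Finset.card_univ, Fintype.card_fin, nsmul_eq_mul] at h1
      have hM0 : (0:ℝ) ≤ M := norm_nonneg _
      have hN1 : (1:ℝ) ≤ N := by exact_mod_cast imx.pos
      nlinarith [mul_le_mul_of_nonneg_left hN1 (by positivity : (0:ℝ) ≤ (N:ℝ) * M^2)]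
    have h0 : (0:ℝ) ≤ N * M := by positivity
    nlinarith [norm_nonneg (xhat x - x)]
  -- K2 : ‖xhat x i₀ - x i₀‖ ≤ ‖w‖
  have hK2 : ‖xhat x i₀ - x i₀‖ ≤ ‖w‖ := by
    have hsq : ‖xhat x i₀ - x i₀‖ ^ 2 ≤ ‖w‖ ^ 2 := by
      have hterm : ‖xhat x i₀ - x i₀‖ ^ 2 = ‖w i₀‖ ^ 2 := by
        simp [hwdef, hi₀S]
      rw [hterm, PiLp.norm_sq_eq_of_L2 (fun i => Blk n i) w]
      exact Finset.single_le_sum (f := fun i => ‖w i‖ ^ 2) (fun i _ => by positivity) (Finset.mem_univ i₀)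
    nlinarith [norm_nonneg w, norm_nonneg (xhat x i₀ - x i₀)]
  -- K3 : ρ * (slo imx * M) ≤ shi i₀ * ‖xhat x i₀ - x i₀‖
  have hK3 : ρ * (slo imx * M) ≤ shi i₀ * ‖xhat x i₀ - x i₀‖ := by
    have h1 : slo imx * M ≤ E imx x := (hE imx x hx).1
    have h2 : ρ * E imx x ≤ E i₀ x := hi₀ imx himxS
    have h3 : E i₀ x ≤ shi i₀ * ‖xhat x i₀ - x i₀‖ := (hE i₀ x hx).2
    nlinarith
  -- assemble
  rw [div_mul_eq_mul_div, div_le_iff₀ (by positivity)]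
  calc ρ * (⨅ i, slo i) * ‖xhat x - x‖
      ≤ ρ * slo imx * (N * M) := by
        apply mul_le_mul (by nlinarith) hK1 (norm_nonneg _) (mul_nonneg hρ0.le (hs imx).1.le)
    _ = N * (ρ * (slo imx * M)) := by ring
    _ ≤ N * (shi i₀ * ‖xhat x i₀ - x i₀‖) := by
        apply mul_le_mul_of_nonneg_left hK3 (le_of_lt hN)
    _ ≤ N * ((⨆ i, shi i) * ‖w‖) := by
        apply mul_le_mul_of_nonneg_left _ (le_of_lt hN)
        exact mul_le_mul hB hK2 (norm_nonneg _) (le_of_lt hBpos)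
    _ = ‖w‖ * (N * ⨆ i, shi i) := by ring
end

section
/- For every x ∈ X and every subset Ŝ ⊆ {1,…,N}, the best-response map satisfies ∑_{i∈Ŝ} ∇_{x_i}F(x)ᵀ (x̂_i(x) − x_i) ≤ − q ∑_{i∈Ŝ} ‖x̂_i(x) − x_i‖² + ∑_{i∈Ŝ} [ G(x) − G(x̂_i(x), x_{-i}) ], where (x̂_i(x), x_{-i}) denotes the vector obtained from x by replacing its i-th block with x̂_i(x). -/
open scoped RealInnerProductSpace
open Filter MeasureTheory ProbabilityTheory

section AuxLemmas
open Topology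

/-- First-order lower bound for a differentiable strongly convex function. -/
lemma strongConvex_grad_ineq {E : Type*} [NormedAddCommGroup E] [InnerProductSpace ℝ E]
    [CompleteSpace E] {s : Set E} {q : ℝ} {f : E → ℝ}
    (hf : StrongConvexOn s q f) (hfd : Differentiable ℝ f)
    {a b : E} (ha : a ∈ s) (hb : b ∈ s) :
    ⟪gradient f a, b - a⟫ ≤ f b - f a - q / 2 * ‖b - a‖ ^ 2 := by
  set d := b - a with hd
  have hgrad : HasGradientAt f (gradient f a) a := (hfd a).hasGradientAt
  have hFder := hasGradientAt_iff_hasFDerivAt.mp hgrad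
  have hline : HasDerivAt (fun t : ℝ => a + t • d) d 0 := by
    simpa using ((hasDerivAt_id (0 : ℝ)).smul_const d).const_add a
  have hFder' : HasFDerivAt f ((InnerProductSpace.toDual ℝ E) (gradient f a))
      (a + (0 : ℝ) • d) := by simpa using hFder
  have hderiv : HasDerivAt (fun t : ℝ => f (a + t • d)) ⟪gradient f a, d⟫ 0 := by
    have := hFder'.comp_hasDerivAt (0 : ℝ) hline
    simpa [Function.comp_def, InnerProductSpace.toDual_apply_apply] using this
  have hslope : Tendsto (slope (fun t : ℝ => f (a + t • d)) 0) (𝓝[>] 0)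
      (𝓝 ⟪gradient f a, d⟫) :=
    (hasDerivAt_iff_tendsto_slope.mp hderiv).mono_left
      (nhdsWithin_mono 0 (fun t ht => ne_of_gt ht))
  have hRHS : Tendsto (fun t : ℝ => f b - f a - (1 - t) * (q / 2 * ‖d‖ ^ 2)) (𝓝[>] 0)
      (𝓝 (f b - f a - q / 2 * ‖d‖ ^ 2)) := by
    have hc : Continuous fun t : ℝ => f b - f a - (1 - t) * (q / 2 * ‖d‖ ^ 2) := by continuity
    simpa using (hc.tendsto 0).mono_left (nhdsWithin_le_nhds (s := Set.Ioi (0 : ℝ)))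
  refine le_of_tendsto_of_tendsto hslope hRHS ?_
  filter_upwards [Ioo_mem_nhdsGT_of_mem (Set.mem_Ico.mpr ⟨le_refl (0 : ℝ), zero_lt_one⟩)]
    with t ht
  obtain ⟨ht0, ht1⟩ := ht
  have hcombo : a + t • d = t • b + (1 - t) • a := by rw [hd]; module
  have key := hf.2 hb ha (le_of_lt ht0) (by linarith : (0 : ℝ) ≤ 1 - t) (by ring)
  simp only [smul_eq_mul, ← hd] at key
  rw [slope_def_field]
  rw [sub_zero, div_le_iff₀ ht0, hcombo]
  simp only [zero_smul, add_zero]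
  nlinarith [key]

/-- A minimizer of strongly-convex-plus-convex satisfies a quadratic growth bound. -/
lemma strongConvex_min_ineq {E : Type*} [NormedAddCommGroup E] [InnerProductSpace ℝ E]
    {s : Set E} {q : ℝ} {f g : E → ℝ}
    (hf : StrongConvexOn s q f) (hg : ConvexOn ℝ s g)
    {a b : E} (ha : a ∈ s) (hb : b ∈ s)
    (hmin : ∀ z ∈ s, f b + g b ≤ f z + g z) :
    f b + g b + q / 2 * ‖b - a‖ ^ 2 ≤ f a + g a := by
  have H : ∀ t ∈ Set.Ioo (0 : ℝ) 1,
      f b + g b + (1 - t) * (q / 2 * ‖b - a‖ ^ 2) ≤ f a + g a := by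
    intro t ht
    obtain ⟨ht0, ht1⟩ := ht
    have hz : t • a + (1 - t) • b ∈ s :=
      hf.1 ha hb (le_of_lt ht0) (by linarith) (by ring)
    have key1 := hf.2 ha hb (le_of_lt ht0) (by linarith : (0 : ℝ) ≤ 1 - t) (by ring)
    have key2 := hg.2 ha hb (le_of_lt ht0) (by linarith : (0 : ℝ) ≤ 1 - t) (by ring)
    have key3 := hmin _ hz
    simp only [smul_eq_mul] at key1 key2
    have hnorm : ‖a - b‖ = ‖b - a‖ := norm_sub_rev a b
    rw [hnorm] at key1
    have h4 : t * (f b + g b + (1 - t) * (q / 2 * ‖b - a‖ ^ 2)) ≤ t * (f a + g a) := by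
      nlinarith [key1, key2, key3]
    exact le_of_mul_le_mul_left h4 ht0
  have hT : Tendsto (fun t : ℝ => f b + g b + (1 - t) * (q / 2 * ‖b - a‖ ^ 2)) (𝓝[>] 0)
      (𝓝 (f b + g b + q / 2 * ‖b - a‖ ^ 2)) := by
    have hc : Continuous fun t : ℝ => f b + g b + (1 - t) * (q / 2 * ‖b - a‖ ^ 2) := by
      continuity
    simpa using (hc.tendsto 0).mono_left (nhdsWithin_le_nhds (s := Set.Ioi (0 : ℝ)))
  refine le_of_tendsto hT ?_
  filter_upwards [Ioo_mem_nhdsGT_of_mem (Set.mem_Ico.mpr ⟨le_refl (0 : ℝ), zero_lt_one⟩)]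
    with t ht using H t ht

end AuxLemmas


lemma upd_combo {N : ℕ} {n : Fin N → ℕ} (x : Full n) (i : Fin N) (z w : Blk n i)
    {c c' : ℝ} (h : c + c' = 1) :
    upd x i (c • z + c' • w) = c • upd x i z + c' • upd x i w := by
  refine PiLp.ext fun j => ?_
  simp only [upd, PiLp.add_apply, PiLp.smul_apply, PiLp.toLp_apply]
  rcases eq_or_ne j i with rfl | hj
  · simp
  · simp only [Function.update_of_ne hj]
    exact (Convex.combo_self h (x j)).symm

/-- **Descent property of the best response (Lemma on errors).** For every `x ∈ X` and every
subset `Ŝ ⊆ {1,…,N}`,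
`∑_{i∈Ŝ} ∇_{x_i}F(x)ᵀ (x̂_i(x) − x_i) ≤ − q ∑_{i∈Ŝ} ‖x̂_i(x) − x_i‖² +
∑_{i∈Ŝ} [G(x) − G(x̂_i(x), x_{-i})]`. -/
theorem best_response_descent_bound
    {N : ℕ} {n : Fin N → ℕ} (Xi : ∀ i, Set (Blk n i))
    (X : Set (Full n)) (hXdef : X = {x : Full n | ∀ i, x i ∈ Xi i})
    (F G : Full n → ℝ) (Ftil : ∀ i, Blk n i → Full n → ℝ)
    -- each X_i is nonempty, closed and convex
    (hXi : ∀ i, (Xi i).Nonempty ∧ IsClosed (Xi i) ∧ Convex ℝ (Xi i))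
    -- F is C¹ on an open set containing X
    (U : Set (Full n)) (hUopen : IsOpen U) (hXU : X ⊆ U) (hFC1 : ContDiffOn ℝ 1 F U)
    -- G is convex and continuous on X
    (hGconv : ConvexOn ℝ X G) (hGcont : ContinuousOn G X)
    -- (F1) each F̃_i(·; w) is strongly convex on X_i with constant q > 0, and differentiable
    (q : ℝ) (hq : 0 < q)
    (hF1 : ∀ i, ∀ w ∈ X, StrongConvexOn (Xi i) q (fun z => Ftil i z w))
    (hFtildiff : ∀ i, ∀ w ∈ X, Differentiable ℝ (fun z => Ftil i z w))
    -- (F2) gradient consistency: ∇F̃_i(x_i; x) = ∇_{x_i} F(x) for all x ∈ X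
    (hF2 : ∀ i, ∀ x ∈ X, gradient (fun z => Ftil i z x) (x i) = pgrad F x i)
    -- the best-response map: x̂_i(x) minimizes F̃_i(·; x) + G(·, x_{-i}) over X_i
    (xhat : Full n → Full n)
    (hxhat : ∀ y ∈ X, ∀ i, xhat y i ∈ Xi i ∧
      ∀ zi ∈ Xi i, Ftil i (xhat y i) y + G (upd y i (xhat y i)) ≤ Ftil i zi y + G (upd y i zi))
    -- the point and the subset of blocks
    (x : Full n) (hx : x ∈ X) (Shat : Finset (Fin N)) :
    ∑ i ∈ Shat, ⟪pgrad F x i, xhat x i - x i⟫ ≤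
      - q * ∑ i ∈ Shat, ‖xhat x i - x i‖ ^ 2 +
        ∑ i ∈ Shat, (G x - G (upd x i (xhat x i))) := by
  have hxXi : ∀ j, x j ∈ Xi j := by rw [hXdef] at hx; exact hx
  have hmemX : ∀ (i : Fin N), ∀ z ∈ Xi i, upd x i z ∈ X := by
    intro i z hz
    rw [hXdef]
    intro j
    rcases eq_or_ne j i with rfl | hj
    · simpa [upd] using hz
    · simpa [upd, Function.update_of_ne hj] using hxXi j
  have hper : ∀ i ∈ Shat, ⟪pgrad F x i, xhat x i - x i⟫ ≤
      -(q * ‖xhat x i - x i‖ ^ 2) + (G x - G (upd x i (xhat x i))) := by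
    intro i _
    obtain ⟨hbX, hmin⟩ := hxhat x hx i
    have hgconv : ConvexOn ℝ (Xi i) (fun z => G (upd x i z)) := by
      refine ⟨(hXi i).2.2, ?_⟩
      intro z hz w hw c c' hc hc' hcc
      have := hGconv.2 (hmemX i z hz) (hmemX i w hw) hc hc' hcc
      rwa [← upd_combo x i z w hcc] at this
    have hA := strongConvex_grad_ineq (hF1 i x hx) (hFtildiff i x hx) (hxXi i) hbX
    rw [hF2 i x hx] at hA
    have hB := strongConvex_min_ineq (hF1 i x hx) hgconv (hxXi i) hbX hmin
    have hupdx : upd x i (x i) = x := by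
      refine PiLp.ext fun j => ?_; simp [upd]
    rw [hupdx] at hB
    linarith
  calc ∑ i ∈ Shat, ⟪pgrad F x i, xhat x i - x i⟫
      ≤ ∑ i ∈ Shat, (-(q * ‖xhat x i - x i‖ ^ 2) + (G x - G (upd x i (xhat x i)))) :=
        Finset.sum_le_sum hper
    _ = - q * ∑ i ∈ Shat, ‖xhat x i - x i‖ ^ 2 +
        ∑ i ∈ Shat, (G x - G (upd x i (xhat x i))) := by
        rw [Finset.sum_add_distrib, neg_mul, Finset.mul_sum, ← Finset.sum_neg_distrib]
end

section
/- Suppose G is convex and globally Lipschitz continuous on X with constant L_G. Let x ∈ X, let Ŝ ⊆ {1,…,N}, let γ ∈ (0, 1/N], let ε_i ≥ 0 for i ∈ Ŝ, and let ẑ ∈ X be defined by ẑ_i = z_i for i ∈ Ŝ, where z_i ∈ X_i satisfies ‖z_i − x̂_i(x)‖ ≤ ε_i, and ẑ_i = x_i for i ∉ Ŝ. Then G( x + γ(ẑ − x) ) ≤ G(x) + γ L_G ∑_{i∈Ŝ} ε_i + γ ∑_{i∈Ŝ} [ G(x̂_i(x), x_{-i}) − G(x) ], where (x̂_i(x), x_{-i})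 denotes the vector obtained from x by replacing its i-th block with x̂_i(x). -/
open scoped RealInnerProductSpace
open Filter MeasureTheory ProbabilityTheory

/-- **One-step bound on `G` (Lemma 6).** Suppose `G` is convex and globally Lipschitz on `X`
with constant `L_G`. With `ẑ_i = z_i` (`‖z_i − x̂_i(x)‖ ≤ ε_i`) for `i ∈ Ŝ` and `ẑ_i = x_i`
otherwise, and `γ ∈ (0, 1/N]`, one has
`G(x + γ(ẑ − x)) ≤ G(x) + γ L_G ∑_{i∈Ŝ} ε_i + γ ∑_{i∈Ŝ} [G(x̂_i(x), x_{-i}) − G(x)]`. -/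
theorem G_one_step_bound
    {N : ℕ} {n : Fin N → ℕ} (Xi : ∀ i, Set (Blk n i))
    (X : Set (Full n)) (hXdef : X = {x : Full n | ∀ i, x i ∈ Xi i})
    (F G : Full n → ℝ) (Ftil : ∀ i, Blk n i → Full n → ℝ)
    -- each X_i is nonempty, closed and convex
    (hXi : ∀ i, (Xi i).Nonempty ∧ IsClosed (Xi i) ∧ Convex ℝ (Xi i))
    -- G is convex and globally Lipschitz continuous on X with constant L_G
    (hGconv : ConvexOn ℝ X G)
    (L_G : ℝ) (hLG : 0 ≤ L_G)
    (hGlip : ∀ a ∈ X, ∀ b ∈ X, |G a - G b| ≤ L_G * ‖a - b‖)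
    -- the strongly convex surrogates (constant q > 0, gradient-consistent with F)
    (q : ℝ) (hq : 0 < q)
    (hF1 : ∀ i, ∀ w ∈ X, StrongConvexOn (Xi i) q (fun z => Ftil i z w))
    (hFtildiff : ∀ i, ∀ w ∈ X, Differentiable ℝ (fun z => Ftil i z w))
    (hF2 : ∀ i, ∀ x ∈ X, gradient (fun z => Ftil i z x) (x i) = pgrad F x i)
    -- the best-response map: x̂_i(x) minimizes F̃_i(·; x) + G(·, x_{-i}) over X_i
    (xhat : Full n → Full n)
    (hxhat : ∀ y ∈ X, ∀ i, xhat y i ∈ Xi i ∧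
      ∀ zi ∈ Xi i, Ftil i (xhat y i) y + G (upd y i (xhat y i)) ≤ Ftil i zi y + G (upd y i zi))
    -- the data of one step
    (x : Full n) (hx : x ∈ X)
    (Shat : Finset (Fin N))
    (γ : ℝ) (hγ : γ ∈ Set.Ioc (0 : ℝ) (1 / (N : ℝ)))
    (ε : Fin N → ℝ) (hε : ∀ i ∈ Shat, 0 ≤ ε i)
    (z : ∀ i, Blk n i)
    (hz : ∀ i ∈ Shat, z i ∈ Xi i ∧ ‖z i - xhat x i‖ ≤ ε i) :
    G (x + γ • ((show Full n from WithLp.toLp 2 (fun j => if j ∈ Shat then z j else x j)) - x)) ≤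
      G x + γ * L_G * ∑ i ∈ Shat, ε i +
        γ * ∑ i ∈ Shat, (G (upd x i (xhat x i)) - G x) := by
  obtain ⟨hγ0, hγ1⟩ := hγ
  -- N > 0
  have hN : 0 < (N : ℝ) := by
    rcases Nat.eq_zero_or_pos N with h | h
    · subst h; norm_num at hγ1; linarith
    · exact_mod_cast h
  set c : ℕ := Shat.card with hc
  have hcN : (c : ℝ) ≤ N := by
    exact_mod_cast Nat.cast_le.mpr (le_trans (Finset.card_le_univ Shat) (by simp))
  have hγc : γ * c ≤ 1 := by
    have h1 : γ * c ≤ γ * N := by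
      apply mul_le_mul_of_nonneg_left hcN hγ0.le
    have h2 : γ * N ≤ (1 / N) * N := mul_le_mul_of_nonneg_right hγ1 hN.le
    have h3 : (1 / (N:ℝ)) * N = 1 := by field_simp
    linarith
  -- membership of updates
  have hmemupd : ∀ i, ∀ v ∈ Xi i, upd x i v ∈ X := by
    intro i v hv
    rw [hXdef]
    intro j
    by_cases hj : j = i
    · subst hj; simpa [upd] using hv
    · have := hXdef ▸ hx
      simpa [upd, Function.update, hj] using this j
  have hmemz : ∀ i ∈ Shat, upd x i (z i) ∈ X := fun i hi => hmemupd i (z i) (hz i hi).1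
  have hmemxh : ∀ i, upd x i (xhat x i) ∈ X := fun i =>
    hmemupd i (xhat x i) (hxhat x hx i).1
  -- the step point as a convex combination
  have hpt : x + γ • ((show Full n from WithLp.toLp 2 (fun j => if j ∈ Shat then z j else x j)) - x)
      = (1 - γ * c) • x + ∑ i ∈ Shat, γ • upd x i (z i) := by
    ext j
    have hsum : (∑ i ∈ Shat, γ • upd x i (z i)) j = ∑ i ∈ Shat, γ • (upd x i (z i) j) := by
      exact (congrFun (WithLp.ofLp_sum (s := Shat) (f := fun i => γ • upd x i (z i))) j).trans
        (Finset.sum_apply j Shat fun i => γ • (upd x i (z i)).ofLp)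
    by_cases hj : j ∈ Shat
    · have : ∑ i ∈ Shat, γ • (upd x i (z i) j)
          = γ • z j + ∑ i ∈ Shat.erase j, γ • (upd x i (z i) j) := by
        rw [← Finset.add_sum_erase _ _ hj]
        simp [upd]
      have h2 : ∑ i ∈ Shat.erase j, γ • (upd x i (z i) j)
          = ∑ i ∈ Shat.erase j, γ • x j := by
        apply Finset.sum_congr rfl
        intro i hi
        have hij : i ≠ j := Finset.ne_of_mem_erase hi
        simp [upd, Function.update, hij.symm]
      have hcard : (Shat.erase j).card = c - 1 := by
        rw [Finset.card_erase_of_mem hj]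
      have hc1 : 1 ≤ c := Finset.card_pos.mpr ⟨j, hj⟩
      have hcast : ((c - 1 : ℕ) : ℝ) = (c : ℝ) - 1 := by
        push_cast [hc1]; ring
      simp only [PiLp.add_apply, PiLp.smul_apply, PiLp.sub_apply, hsum, this, h2,
        Finset.sum_const, hcard, if_pos hj, smul_smul, ← Nat.cast_smul_eq_nsmul ℝ, hcast]
      module
    · have h2 : ∑ i ∈ Shat, γ • (upd x i (z i) j) = ∑ i ∈ Shat, γ • x j := by
        apply Finset.sum_congr rfl
        intro i hi
        have hij : i ≠ j := by rintro rfl; exact hj hi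
        simp [upd, Function.update, hij.symm]
      simp only [PiLp.add_apply, PiLp.smul_apply, PiLp.sub_apply, hsum, h2,
        Finset.sum_const, if_neg hj, smul_smul, ← Nat.cast_smul_eq_nsmul ℝ]
      module
  -- Jensen
  have hjensen : G ((1 - γ * c) • x + ∑ i ∈ Shat, γ • upd x i (z i))
      ≤ (1 - γ * c) • G x + ∑ i ∈ Shat, γ • G (upd x i (z i)) := by
    apply hGconv.map_add_sum_le (fun i _ => hγ0.le) _ hmemz (by linarith) hx
    simp [Finset.sum_const, nsmul_eq_mul]
    ring
  -- blockwise Lipschitz bound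
  have hblock : ∀ i ∈ Shat, G (upd x i (z i)) ≤ G (upd x i (xhat x i)) + L_G * ε i := by
    intro i hi
    have hnormeq : ‖upd x i (z i) - upd x i (xhat x i)‖ = ‖z i - xhat x i‖ := by
      have heq : upd x i (z i) - upd x i (xhat x i)
          = (WithLp.equiv 2 (∀ j, Blk n j)).symm (Pi.single i (z i - xhat x i)) := by
        ext j
        by_cases hj : j = i
        · subst hj
          simp [upd, WithLp.equiv_symm_apply, PiLp.toLp_apply, Pi.single, PiLp.sub_apply]
        · simp [upd, Function.update, hj, WithLp.equiv_symm_apply, PiLp.toLp_apply, Pi.single,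
            PiLp.sub_apply]
      rw [heq, WithLp.equiv_symm_apply, PiLp.norm_toLp_single]
    have hl := hGlip _ (hmemz i hi) _ (hmemxh i)
    have h1 : G (upd x i (z i)) - G (upd x i (xhat x i)) ≤ L_G * ‖z i - xhat x i‖ := by
      calc G (upd x i (z i)) - G (upd x i (xhat x i))
          ≤ |G (upd x i (z i)) - G (upd x i (xhat x i))| := le_abs_self _
        _ ≤ L_G * ‖upd x i (z i) - upd x i (xhat x i)‖ := hl
        _ = L_G * ‖z i - xhat x i‖ := by rw [hnormeq]
    have h2 : L_G * ‖z i - xhat x i‖ ≤ L_G * ε i :=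
      mul_le_mul_of_nonneg_left (hz i hi).2 hLG
    linarith
  -- put it together
  have hsum2 : ∑ i ∈ Shat, γ • G (upd x i (z i))
      ≤ ∑ i ∈ Shat, γ * (G (upd x i (xhat x i)) + L_G * ε i) := by
    apply Finset.sum_le_sum
    intro i hi
    simp only [smul_eq_mul]
    exact mul_le_mul_of_nonneg_left (hblock i hi) hγ0.le
  rw [hpt]
  refine le_trans hjensen ?_
  have hexpand : ∑ i ∈ Shat, γ * (G (upd x i (xhat x i)) + L_G * ε i)
      = γ * ∑ i ∈ Shat, G (upd x i (xhat x i)) + γ * L_G * ∑ i ∈ Shat, ε i := by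
    rw [Finset.mul_sum, Finset.mul_sum]
    rw [← Finset.sum_add_distrib]
    apply Finset.sum_congr rfl
    intro i _
    ring
  have hfin : γ * ∑ i ∈ Shat, (G (upd x i (xhat x i)) - G x)
      = γ * ∑ i ∈ Shat, G (upd x i (xhat x i)) - γ * c * G x := by
    rw [Finset.sum_sub_distrib, Finset.sum_const, nsmul_eq_mul]
    ring
  have := le_trans (add_le_add_left hsum2 ((1 - γ * c) • G x)) (le_of_eq (by rw [hexpand]))
  simp only [smul_eq_mul] at this ⊢
  linarith [this, hfin]
end
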